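/- Let G be a finite 2-group generated by g₁, ..., g_k such that the index [⟨g₁,...,g_i⟩ : ⟨g₁,...,g_{i-1}⟩] ≤ 2 for all i (a smooth generating sequence). Let H ≤ G be a subgroup of index 2, let j = min{i : g_i ∉ H}, and define β_i = g_i if g_i ∈ H and β_i = g_j⁻¹ g_i otherwise. Then (β₁, ..., β_k) is a smooth generating sequence for H; in particular β₁, ..., β_k generate H. -/

import Mathlib

lemma aux_card_mul_relindex {G : Type*} [Group G] {L M : Subgroup G} (h : L ≤ M) :
    Nat.card L * L.relIndex M = Nat.card M := by
  have := Subgroup.card_mul_index (L.subgroupOf M)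
  rwa [Nat.card_congr (Subgroup.subgroupOfEquivOfLe h).toEquiv] at this

lemma aux_two_mul_le {a b : ℕ} (hd : a ∣ b) (hne : a ≠ b) (hb : b ≠ 0) : 2 * a ≤ b := by
  obtain ⟨c, rfl⟩ := hd
  rcases Nat.eq_zero_or_pos a with rfl | ha
  · omega
  have hc : c ≠ 0 := by rintro rfl; simp at hb
  have hc1 : c ≠ 1 := by rintro rfl; simp at hne
  have h2c : 2 ≤ c := by omega
  calc 2 * a = a * 2 := by ring
  _ ≤ a * c := Nat.mul_le_mul_left a h2c

lemma aux_sub_card {G : Type*} [Group G] [Finite G] {P Q : Subgroup G} (h : P ≤ Q) (hne : P ≠ Q) :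
    2 * Nat.card P ≤ Nat.card Q := by
  refine aux_two_mul_le (Subgroup.card_dvd_of_le h) ?_ Nat.card_pos.ne'
  intro hcard
  exact hne (Subgroup.eq_of_le_of_card_ge h hcard.ge)

theorem stmt4 {G : Type*} [Group G] [Finite G] (hG : IsPGroup 2 G)
    (k : ℕ) (g : Fin k → G)
    (hgen : Subgroup.closure (Set.range g) = ⊤)
    (hsmooth : ∀ i : ℕ, i < k →
      (Subgroup.closure (g '' {j : Fin k | (j : ℕ) < i})).relIndex
        (Subgroup.closure (g '' {j : Fin k | (j : ℕ) < i + 1})) ≤ 2)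
    (H : Subgroup G) [DecidablePred (· ∈ H)] (hH : H.index = 2)
    (j : Fin k) (hj : g j ∉ H) (hjmin : ∀ i : Fin k, (i : ℕ) < (j : ℕ) → g i ∈ H)
    (β : Fin k → G)
    (hβ : ∀ i : Fin k, β i = if g i ∈ H then g i else (g j)⁻¹ * g i) :
    Subgroup.closure (Set.range β) = H ∧
    ∀ i : ℕ, i < k →
      (Subgroup.closure (β '' {j' : Fin k | (j' : ℕ) < i})).relIndex
        (Subgroup.closure (β '' {j' : Fin k | (j' : ℕ) < i + 1})) ≤ 2 := by
  classical
  set S : ℕ → Set (Fin k) := fun n => {j' : Fin k | (j' : ℕ) < n} with hS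
  set A : ℕ → Subgroup G := fun n => Subgroup.closure (g '' S n) with hA
  set B : ℕ → Subgroup G := fun n => Subgroup.closure (β '' S n) with hB
  have hβH : ∀ i : Fin k, β i ∈ H := by
    intro i
    rw [hβ]
    split_ifs with h
    · exact h
    · rw [Subgroup.mul_mem_iff_of_index_two hH]
      simp [H.inv_mem_iff, hj, h]
  have hAmono : ∀ n, A n ≤ A (n + 1) := by
    intro n
    exact Subgroup.closure_mono (Set.image_mono (fun x hx => Nat.lt_succ_of_lt hx))
  have hBmono : ∀ n, B n ≤ B (n + 1) := by
    intro n
    exact Subgroup.closure_mono (Set.image_mono (fun x hx => Nat.lt_succ_of_lt hx))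
  have hSsucc : ∀ n (hn : n < k), S (n + 1) = insert ⟨n, hn⟩ (S n) := by
    intro n hn
    ext m
    simp only [hS, Set.mem_setOf_eq, Set.mem_insert_iff, Fin.ext_iff]
    omega
  have hAsucc : ∀ n (hn : n < k),
      A (n + 1) = Subgroup.closure {g ⟨n, hn⟩} ⊔ A n := by
    intro n hn
    simp only [hA]
    rw [hSsucc n hn, Set.image_insert_eq, ← Set.singleton_union, Subgroup.closure_union]
  have hBsucc : ∀ n (hn : n < k),
      B (n + 1) = Subgroup.closure {β ⟨n, hn⟩} ⊔ B n := by
    intro n hn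
    simp only [hB]
    rw [hSsucc n hn, Set.image_insert_eq, ← Set.singleton_union, Subgroup.closure_union]
  -- key induction
  have key : ∀ n, n ≤ k → B n = A n ⊓ H := by
    intro n
    induction n with
    | zero =>
      intro _
      have h0 : S 0 = ∅ := by ext m; simp [hS]
      rw [hA, hB]
      simp [h0]
    | succ n ih =>
      intro hn1
      have hn : n < k := hn1
      have ihn := ih (Nat.le_of_lt hn)
      set i : Fin k := ⟨n, hn⟩ with hi
      by_cases hcase : n < (j : ℕ)
      · -- everything in S (n+1) lands in H
        have hgH : ∀ m ∈ S (n + 1), g m ∈ H := by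
          intro m hm
          exact hjmin m (by simp only [hS, Set.mem_setOf_eq] at hm; omega)
        have himg : β '' S (n + 1) = g '' S (n + 1) := by
          apply Set.image_congr
          intro m hm
          rw [hβ, if_pos (hgH m hm)]
        have hAle : A (n + 1) ≤ H := by
          rw [hA]
          exact (Subgroup.closure_le H).2 (by rintro x ⟨m, hm, rfl⟩; exact hgH m hm)
        have hBA : B (n + 1) = A (n + 1) := by
          simp only [hB, hA]
          rw [himg]
        rw [hBA, inf_eq_left.2 hAle]
      · push_neg at hcase
        have hrel := hsmooth n hn
        have hjS : j ∈ S (n + 1) := by simpa [hS] using Nat.lt_succ_of_le hcase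
        have hgjA' : g j ∈ A (n + 1) :=
          Subgroup.subset_closure (Set.mem_image_of_mem g hjS)
        by_cases hji : (j : ℕ) = n
        · -- i = j case
          have hij : i = j := by rw [hi]; exact Fin.ext hji.symm
          have hAnH : A n ≤ H := by
            rw [hA]
            refine (Subgroup.closure_le H).2 ?_
            rintro x ⟨m, hm, rfl⟩
            exact hjmin m (by simpa [hS, hji] using hm)
          have hBn : B n = A n := by rw [ihn, inf_eq_left.2 hAnH]
          have hβi : β i = 1 := by rw [hβ, hij, if_neg hj, inv_mul_cancel]
          have hB' : B (n + 1) = A n := by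
            rw [hBsucc n hn, ← hi, hβi, Subgroup.closure_singleton_one, bot_sup_eq, hBn]
          rw [hB']
          -- show A n = A (n+1) ⊓ H
          refine le_antisymm (le_inf (hAmono n) hAnH) ?_
          have hQle : A (n + 1) ⊓ H ≤ A (n + 1) := inf_le_left
          have hQne : A (n + 1) ⊓ H ≠ A (n + 1) := by
            intro hEq
            have : g j ∈ A (n + 1) ⊓ H := by rw [hEq]; exact hgjA'
            exact hj this.2
          have h1 : 2 * Nat.card (A (n + 1) ⊓ H : Subgroup G) ≤ Nat.card (A (n + 1)) :=
            aux_sub_card hQle hQne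
          have hrel' : (A n).relIndex (A (n + 1)) ≤ 2 := hrel
          have h2 : Nat.card (A (n + 1)) ≤ Nat.card (A n) * 2 := by
            rw [← aux_card_mul_relindex (hAmono n)]
            exact Nat.mul_le_mul_left _ hrel'
          have hle : Nat.card (A (n + 1) ⊓ H : Subgroup G) ≤ Nat.card (A n) := by omega
          intro x hx
          have := Subgroup.eq_of_le_of_card_ge (le_inf (hAmono n) hAnH) hle
          rw [this]; exact hx
        · -- j < n
          have hjn : (j : ℕ) < n := lt_of_le_of_ne hcase hji
          have hgjA : g j ∈ A n :=
            Subgroup.subset_closure (Set.mem_image_of_mem g (by simpa [hS] using hjn))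
          by_cases hgi : g i ∈ A n
          · have hA' : A (n + 1) = A n := by
              rw [hAsucc n hn, sup_eq_right.2 ((Subgroup.closure_le _).2 (Set.singleton_subset_iff.2 hgi))]
            have hβiA : β i ∈ A n := by
              rw [hβ]
              split_ifs
              · exact hgi
              · exact Subgroup.mul_mem _ (Subgroup.inv_mem _ hgjA) hgi
            have hβiB : β i ∈ B n := by rw [ihn]; exact ⟨hβiA, hβH i⟩
            rw [hBsucc n hn, ← hi, sup_eq_right.2 ((Subgroup.closure_le _).2 (by simp [hβiB])),
              ihn, hA']
          · -- g i ∉ A n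
            have hgiA' : g i ∈ A (n + 1) := by
              rw [hAsucc n hn]
              exact Subgroup.mem_sup_left (Subgroup.subset_closure rfl)
            have hβiA' : β i ∈ A (n + 1) := by
              rw [hβ]
              split_ifs
              · exact hgiA'
              · exact Subgroup.mul_mem _ (Subgroup.inv_mem _ hgjA') hgiA'
            have hβiQ : β i ∈ A (n + 1) ⊓ H := ⟨hβiA', hβH i⟩
            have hβiAn : β i ∉ A n := by
              rw [hβ]
              split_ifs with h
              · exact hgi
              · intro hmem
                exact hgi (by
                  have : g j * ((g j)⁻¹ * g i) ∈ A n := Subgroup.mul_mem _ hgjA hmem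
                  simpa using this)
            have hβiBn : β i ∉ B n := fun h => hβiAn (ihn ▸ h).1
            -- P := B (n+1), Q := A (n+1) ⊓ H
            have hPQ : B (n + 1) ≤ A (n + 1) ⊓ H := by
              rw [hBsucc n hn, ← hi]
              refine sup_le ((Subgroup.closure_le _).2 (Set.singleton_subset_iff.2 hβiQ)) ?_
              rw [ihn]
              exact inf_le_inf_right H (hAmono n)
            -- card bounds
            have hBnP : B n ≤ B (n + 1) := hBmono n
            have hBnPne : B n ≠ B (n + 1) := by
              intro hEq
              apply hβiBn
              rw [hEq, hBsucc n hn, ← hi]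
              exact Subgroup.mem_sup_left (Subgroup.subset_closure rfl)
            have h1 : 2 * Nat.card (B n) ≤ Nat.card (B (n + 1)) := aux_sub_card hBnP hBnPne
            -- card of B n : relindex of H in A n ≤ 2
            have hrH : (H.relIndex (A n)) ≤ 2 := by
              have h0 : H.relIndex (⊤ : Subgroup G) ≠ 0 := by
                rw [Subgroup.relIndex_top_right]
                exact Subgroup.index_ne_zero_of_finite
              have := Subgroup.relIndex_le_of_le_right (le_top : A n ≤ ⊤) h0
              rwa [Subgroup.relIndex_top_right, hH] at this
            have hBnAn : B n ≤ A n := ihn ▸ inf_le_left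
            have h2 : Nat.card (A n) ≤ 2 * Nat.card (B n) := by
              have hc := aux_card_mul_relindex (show B n ≤ A n from hBnAn)
              have hrel2 : (B n).relIndex (A n) ≤ 2 := by
                rw [ihn, inf_comm, Subgroup.inf_relIndex_right]
                exact hrH
              nlinarith [Nat.card_pos (α := (B n : Subgroup G))]
            -- card of Q ≤ card A n
            have hQne : A (n + 1) ⊓ H ≠ A (n + 1) := by
              intro hEq
              have : g j ∈ A (n + 1) ⊓ H := by rw [hEq]; exact hgjA'
              exact hj this.2
            have h3 : 2 * Nat.card (A (n + 1) ⊓ H : Subgroup G) ≤ Nat.card (A (n + 1)) :=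
              aux_sub_card inf_le_left hQne
            have hrel' : (A n).relIndex (A (n + 1)) ≤ 2 := hrel
            have h4 : Nat.card (A (n + 1)) ≤ Nat.card (A n) * 2 := by
              rw [← aux_card_mul_relindex (hAmono n)]
              exact Nat.mul_le_mul_left _ hrel'
            have hle : Nat.card (A (n + 1) ⊓ H : Subgroup G) ≤ Nat.card (B (n + 1)) := by omega
            exact (Subgroup.eq_of_le_of_card_ge hPQ hle)
  constructor
  · have hSk : S k = Set.univ := by ext m; simp [hS, m.isLt]
    have h1 : B k = A k ⊓ H := key k le_rfl
    have h2 : A k = ⊤ := by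
      rw [hA]; simp only [hSk, Set.image_univ]; exact hgen
    have : Subgroup.closure (Set.range β) = B k := by
      rw [hB]; simp only [hSk, Set.image_univ]
    rw [this, h1, h2, top_inf_eq]
  · intro n hn
    have h1 := key n (Nat.le_of_lt hn)
    have h2 := key (n + 1) hn
    show (B n).relIndex (B (n + 1)) ≤ 2
    rw [h1, h2]
    have heq : A n ⊓ (A (n + 1) ⊓ H) = A n ⊓ H := by
      rw [← inf_assoc, inf_of_le_left (hAmono n)]
    calc (A n ⊓ H).relIndex (A (n + 1) ⊓ H)
        = (A n ⊓ (A (n+1) ⊓ H)).relIndex (A (n+1) ⊓ H) := by rw [heq]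
      _ = (A n).relIndex (A (n + 1) ⊓ H) := Subgroup.inf_relIndex_right _ _
      _ ≤ (A n).relIndex (A (n + 1)) := Subgroup.relIndex_le_of_le_right inf_le_left
          Subgroup.index_ne_zero_of_finite
      _ ≤ 2 := hsmooth n hn
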